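/- Let F be the Minkowski gauge of a compact convex body K ⊂ ℝⁿ with 0 in its interior, let C ≥ 1 satisfy F(−v) ≤ C·F(v) for all v, and let μ be a Borel probability measure supported in the compact ball B̄(x₀,R) whose support is not contained in a single affine line. Assume that for every z ∈ B̄(x₀,R), the function x ↦ F(z−x) is strictly convex along every nonconstant segment contained in B̄(x₀, C(1+C)R) whose affine line does not pass through z. Then the median functional F_μ is strictly convex on B̄(x₀, C(1+C)R) and has a unique minimizer m over B̄(x₀, C(1+C)R) (the median of μ in this ball). -/

import Mathlib

open MeasureTheory Metric Set Topology

/-- Uniqueness of the median in the flat Minkowski model: if `F` is the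
Minkowski gauge of a compact convex body `K ⊂ ℝⁿ` with `0 ∈ int K`, `F(-v) ≤ C F(v)`,
`μ` is a Borel probability measure supported in `B̄(x₀,R)` whose support is not contained
in a single affine line, and for each `z ∈ B̄(x₀,R)` the function `x ↦ F(z-x)` is strictly
convex along every nonconstant segment of `B̄(x₀, C(1+C)R)` whose affine line misses `z`,
then the median functional `F_μ` is strictly convex on `B̄(x₀, C(1+C)R)` and has a unique
minimizer there. -/
theorem median_unique_minkowski
    {n : ℕ} (K : Set (EuclideanSpace ℝ (Fin n)))
    (hK_cpt : IsCompact K) (hK_conv : Convex ℝ K) (hK_int : (0 : EuclideanSpace ℝ (Fin n)) ∈ interior K)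
    (F : EuclideanSpace ℝ (Fin n) → ℝ) (hF : F = gauge K)
    (C : ℝ) (hC : 1 ≤ C) (hrev : ∀ v, F (-v) ≤ C * F v)
    (x₀ : EuclideanSpace ℝ (Fin n)) (R : ℝ) (hR : 0 < R)
    (μ : Measure (EuclideanSpace ℝ (Fin n))) [IsProbabilityMeasure μ]
    (hsupp : μ {z | F (z - x₀) ≤ R}ᶜ = 0)
    (hnotline : ¬ ∃ a b : EuclideanSpace ℝ (Fin n),
      μ {z | ∃ t : ℝ, z = a + t • b}ᶜ = 0)
    (hconv : ∀ z, F (z - x₀) ≤ R →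
      ∀ x y : EuclideanSpace ℝ (Fin n),
        F (x - x₀) ≤ C * (1 + C) * R → F (y - x₀) ≤ C * (1 + C) * R → x ≠ y →
        (∀ t : ℝ, x + t • (y - x) ≠ z) →
        StrictConvexOn ℝ (segment ℝ x y) (fun w => F (z - w))) :
    StrictConvexOn ℝ {x | F (x - x₀) ≤ C * (1 + C) * R}
        (fun x => ∫ z, F (z - x) ∂μ) ∧
    (∃! m : EuclideanSpace ℝ (Fin n), F (m - x₀) ≤ C * (1 + C) * R ∧
      ∀ x, F (x - x₀) ≤ C * (1 + C) * R →
        (∫ z, F (z - m) ∂μ) ≤ ∫ z, F (z - x) ∂μ) := by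
  subst hF
  have hnhds : K ∈ 𝓝 (0 : EuclideanSpace ℝ (Fin n)) := mem_interior_iff_mem_nhds.mp hK_int
  have habs : Absorbent ℝ K := absorbent_nhds_zero hnhds
  have hcont : Continuous (gauge K) := continuous_gauge hK_conv hnhds
  have hnn : ∀ v : EuclideanSpace ℝ (Fin n), 0 ≤ gauge K v := fun v => gauge_nonneg v
  have hadd : ∀ u v : EuclideanSpace ℝ (Fin n), gauge K (u + v) ≤ gauge K u + gauge K v :=
    gauge_add_le hK_conv habs
  have hsmul : ∀ (a : ℝ), 0 ≤ a → ∀ v : EuclideanSpace ℝ (Fin n), gauge K (a • v) = a * gauge K v := by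
    intro a ha v
    rw [gauge_smul_of_nonneg ha, smul_eq_mul]
  -- convexity estimate
  have hgc : ∀ (u v : EuclideanSpace ℝ (Fin n)) (a b : ℝ), 0 ≤ a → 0 ≤ b →
      gauge K (a • u + b • v) ≤ a * gauge K u + b * gauge K v := by
    intro u v a b ha hb
    calc gauge K (a • u + b • v) ≤ gauge K (a • u) + gauge K (b • v) := hadd _ _
      _ = a * gauge K u + b * gauge K v := by rw [hsmul a ha, hsmul b hb]
  have hae : ∀ᵐ z ∂μ, gauge K (z - x₀) ≤ R := by
    rw [ae_iff]
    rw [show {z : EuclideanSpace ℝ (Fin n) | ¬ gauge K (z - x₀) ≤ R} = {z : EuclideanSpace ℝ (Fin n) | gauge K (z - x₀) ≤ R}ᶜ from rfl]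
    exact hsupp
  -- integrability
  have hint : ∀ x : EuclideanSpace ℝ (Fin n), Integrable (fun z => gauge K (z - x)) μ := by
    intro x
    refine Integrable.mono' (integrable_const (R + gauge K (x₀ - x)))
      ((hcont.comp (continuous_id.sub continuous_const)).aestronglyMeasurable) ?_
    filter_upwards [hae] with z hz
    rw [Real.norm_of_nonneg (hnn _)]
    calc gauge K (z - x) = gauge K ((z - x₀) + (x₀ - x)) := by rw [sub_add_sub_cancel]
      _ ≤ gauge K (z - x₀) + gauge K (x₀ - x) := hadd _ _
      _ ≤ R + gauge K (x₀ - x) := by linarith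
  set r : ℝ := C * (1 + C) * R with hrdef
  have hr : 0 < r := by
    have hC0 : (0:ℝ) < C := lt_of_lt_of_le one_pos hC
    have h9 : (0:ℝ) < C * (1 + C) := by nlinarith
    exact mul_pos h9 hR
  set B : Set (EuclideanSpace ℝ (Fin n)) := {x | gauge K (x - x₀) ≤ r} with hBdef
  have hBconv : Convex ℝ B := by
    intro x hx y hy a b ha hb hab
    simp only [hBdef, Set.mem_setOf_eq] at hx hy ⊢
    have h1 : a • x + b • y - x₀ = a • (x - x₀) + b • (y - x₀) := by
      have h2 : a • (x - x₀) + b • (y - x₀) = a • x + b • y - (a + b) • x₀ := by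
        rw [smul_sub, smul_sub, add_smul]; abel
      rw [h2, hab, one_smul]
    rw [h1]
    calc gauge K (a • (x - x₀) + b • (y - x₀)) ≤ a * gauge K (x - x₀) + b * gauge K (y - x₀) :=
        hgc _ _ a b ha hb
      _ ≤ a * r + b * r := by
        have := mul_le_mul_of_nonneg_left hx ha
        have := mul_le_mul_of_nonneg_left hy hb
        linarith
      _ = r := by rw [← add_mul, hab, one_mul]
  -- strict convexity
  have hsc : StrictConvexOn ℝ B (fun x => ∫ z, gauge K (z - x) ∂μ) := by
    refine ⟨hBconv, ?_⟩
    intro x hx y hy hxy a b ha hb hab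
    set w := a • x + b • y with hw
    have hzw : ∀ z : EuclideanSpace ℝ (Fin n), z - w = a • (z - x) + b • (z - y) := by
      intro z
      have h2 : a • (z - x) + b • (z - y) = (a + b) • z - (a • x + b • y) := by
        rw [smul_sub, smul_sub, add_smul]; abel
      rw [hw, h2, hab, one_smul]
    set g : EuclideanSpace ℝ (Fin n) → ℝ := fun z => a * gauge K (z - x) + b * gauge K (z - y) - gauge K (z - w)
      with hgdef
    have hg0 : ∀ z, 0 ≤ g z := by
      intro z
      have h1 := hgc (z - x) (z - y) a b ha.le hb.le
      rw [← hzw z] at h1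
      simp only [hgdef]
      linarith
    have hgi : Integrable g μ :=
      (((hint x).const_mul a).add ((hint y).const_mul b)).sub (hint w)
    set T : Set (EuclideanSpace ℝ (Fin n)) := {z | gauge K (z - x₀) ≤ R} ∩ {z | ∀ t : ℝ, x + t • (y - x) ≠ z} with hTdef
    have hgpos : ∀ z ∈ T, 0 < g z := by
      intro z hz
      have hs := hconv z hz.1 x y hx hy hxy hz.2
      have h2 := hs.2 (left_mem_segment ℝ x y) (right_mem_segment ℝ x y) hxy ha hb hab
      simp only [smul_eq_mul] at h2
      simp only [hgdef, hw]
      linarith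
    have hTpos : 0 < μ T := by
      rcases eq_or_ne (μ T) 0 with h0 | h0
      · exfalso
        apply hnotline
        refine ⟨x, y - x, ?_⟩
        have hsub : {z : EuclideanSpace ℝ (Fin n) | ∃ t : ℝ, z = x + t • (y - x)}ᶜ ⊆
            T ∪ {z : EuclideanSpace ℝ (Fin n) | gauge K (z - x₀) ≤ R}ᶜ := by
          intro z hz
          by_cases hzS : gauge K (z - x₀) ≤ R
          · exact Or.inl ⟨hzS, fun t ht => hz ⟨t, ht.symm⟩⟩
          · exact Or.inr hzS
        refine le_antisymm ?_ zero_le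
        calc μ _ ≤ μ (T ∪ {z : EuclideanSpace ℝ (Fin n) | gauge K (z - x₀) ≤ R}ᶜ) := measure_mono hsub
          _ ≤ μ T + μ ({z : EuclideanSpace ℝ (Fin n) | gauge K (z - x₀) ≤ R}ᶜ) := measure_union_le _ _
          _ = 0 := by rw [h0, hsupp, add_zero]
      · exact h0.bot_lt
    have hI : 0 < ∫ z, g z ∂μ := by
      rw [integral_pos_iff_support_of_nonneg hg0 hgi]
      exact lt_of_lt_of_le hTpos (measure_mono fun z hz => ne_of_gt (hgpos z hz))
    have heq : ∫ z, g z ∂μ = a * (∫ z, gauge K (z - x) ∂μ) + b * (∫ z, gauge K (z - y) ∂μ)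
        - ∫ z, gauge K (z - w) ∂μ := by
      simp only [hgdef]
      have i1 : Integrable (fun z => a * gauge K (z - x)) μ := (hint x).const_mul a
      have i2 : Integrable (fun z => b * gauge K (z - y)) μ := (hint y).const_mul b
      have i12 : Integrable (fun z => a * gauge K (z - x) + b * gauge K (z - y)) μ := i1.add i2
      rw [integral_sub i12 (hint w), integral_add i1 i2, integral_const_mul, integral_const_mul]
    simp only [smul_eq_mul]
    rw [heq] at hI
    linarith
  refine ⟨hsc, ?_⟩
  -- existence of a minimizer
  obtain ⟨M, hM, hKM⟩ := hK_cpt.isBounded.subset_closedBall_lt 0 0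
  have hBcl : IsClosed B :=
    isClosed_le (hcont.comp (continuous_id.sub continuous_const)) continuous_const
  have hBbd : Bornology.IsBounded B := by
    refine (isBounded_closedBall (x := x₀) (r := M * r)).subset ?_
    intro x hx
    have h1 : ‖x - x₀‖ / M ≤ gauge K (x - x₀) := le_gauge_of_subset_closedBall habs hM.le hKM
    have h2 : ‖x - x₀‖ ≤ M * r := by
      rw [div_le_iff₀ hM] at h1
      calc ‖x - x₀‖ ≤ gauge K (x - x₀) * M := h1
        _ ≤ r * M := mul_le_mul_of_nonneg_right hx hM.le
        _ = M * r := mul_comm _ _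
    rw [mem_closedBall, dist_eq_norm]
    exact h2
  have hBcpt : IsCompact B := isCompact_of_isClosed_isBounded hBcl hBbd
  have hBne : B.Nonempty := ⟨x₀, by simp only [hBdef, Set.mem_setOf_eq, sub_self, gauge_zero]; exact hr.le⟩
  -- continuity of the median functional
  obtain ⟨ε, hε, hball⟩ := Metric.mem_nhds_iff.mp hnhds
  have hgn : ∀ v : EuclideanSpace ℝ (Fin n), gauge K v ≤ ‖v‖ / ε := fun v =>
    (gauge_mono (absorbent_ball_zero hε) hball v).trans_eq (gauge_ball hε.le v)
  have hlip : ∀ x y : EuclideanSpace ℝ (Fin n), (∫ z, gauge K (z - x) ∂μ) ≤ (∫ z, gauge K (z - y) ∂μ) + gauge K (y - x) := by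
    intro x y
    have hpt : ∀ z : EuclideanSpace ℝ (Fin n), gauge K (z - x) ≤ gauge K (z - y) + gauge K (y - x) := by
      intro z
      have := hadd (z - y) (y - x)
      rwa [sub_add_sub_cancel] at this
    calc (∫ z, gauge K (z - x) ∂μ) ≤ ∫ z, (gauge K (z - y) + gauge K (y - x)) ∂μ :=
        integral_mono (hint x) ((hint y).add (integrable_const _)) hpt
      _ = (∫ z, gauge K (z - y) ∂μ) + gauge K (y - x) := by
        rw [integral_add (hint y) (integrable_const _), integral_const]
        simp
  have hFcont : Continuous (fun x : EuclideanSpace ℝ (Fin n) => ∫ z, gauge K (z - x) ∂μ) := by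
    refine (LipschitzWith.of_dist_le_mul (K := ⟨1 / ε, by positivity⟩) ?_).continuous
    intro x y
    rw [Real.dist_eq, abs_sub_le_iff]
    have e1 : gauge K (y - x) ≤ 1 / ε * dist x y := by
      rw [dist_eq_norm']
      calc gauge K (y - x) ≤ ‖y - x‖ / ε := hgn _
        _ = 1 / ε * ‖y - x‖ := by ring
    have e2 : gauge K (x - y) ≤ 1 / ε * dist x y := by
      rw [dist_eq_norm]
      calc gauge K (x - y) ≤ ‖x - y‖ / ε := hgn _
        _ = 1 / ε * ‖x - y‖ := by ring
    change _ ≤ (1 / ε) * dist x y ∧ _ ≤ (1 / ε) * dist x y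
    exact ⟨by linarith [hlip x y], by linarith [hlip y x]⟩
  obtain ⟨m, hmB, hmin⟩ := hBcpt.exists_isMinOn hBne hFcont.continuousOn
  refine ⟨m, ⟨hmB, fun x hx => hmin hx⟩, ?_⟩
  rintro m' ⟨hm'B, hm'min⟩
  by_contra hne
  have heq : (∫ z, gauge K (z - m) ∂μ) = ∫ z, gauge K (z - m') ∂μ :=
    le_antisymm (hmin hm'B) (hm'min m hmB)
  have hmid : (1/2 : ℝ) • m' + (1/2 : ℝ) • m ∈ B :=
    hBconv hm'B hmB (by norm_num) (by norm_num) (by norm_num)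
  have hlt := hsc.2 hm'B hmB hne (by norm_num : (0:ℝ) < 1/2) (by norm_num : (0:ℝ) < 1/2) (by norm_num)
  simp only [smul_eq_mul] at hlt
  have := hmin hmid
  simp only [isMinOn_iff] at hmin
  have h3 := hmin _ hmid
  rw [← heq] at hlt
  linarith
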